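/- Identical cycle breaking on two graphs with common cycle structure and common weights on cycle edges. Let G_1 and G_2 be finite simple graphs on a common vertex set with Conn(G_1) = Conn(G_2) = C (equality as edge sets). Let u_1 : E(G_1) → ℝ and u_2 : E(G_2) → ℝ be injective weight functions such that u_1(e) = u_2(e) for every e ∈ C. Then the sets of edges removed by cycle breaking coincide: E(G_1) \ MSF(G_1, u_1) = E(G_2) \ MSF(G_2, u_2). Consequently, the symmetric difference of the two minimum spanning forests equals the symmetric difference of the two graphs: MSF(G_1,u_1) Δ MSF(G_2,u_2) = E(G_1) Δ E(G_2). -/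
import Mathlib


open MeasureTheory ProbabilityTheory Filter SimpleGraph

noncomputable section

namespace MSTNoise

/-- The minimum spanning forest of a graph `G` with edge weights `u`:
the set of edges `e` of `G` such that there is no path between the endpoints of `e`
using only edges of `G` of `u`-weight strictly smaller than `u e`. -/
def MSF {V : Type*} (G : SimpleGraph V) (u : Sym2 V → ℝ) : Set (Sym2 V) :=
  {e | e ∈ G.edgeSet ∧ ∀ x y : V, e = s(x, y) →
      ¬ (SimpleGraph.fromEdgeSet {f | f ∈ G.edgeSet ∧ u f < u e}).Reachable x y}

/-- The set of edges of `G` lying on a cycle of `G`. -/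
def ConnE {V : Type*} (G : SimpleGraph V) : Set (Sym2 V) :=
  {e | ∃ (x : V) (c : G.Walk x x), c.IsCycle ∧ e ∈ c.edges}

/-- The metric space structure on a subset `S` of the vertices of `G` in which all points
are mutually reachable, with distance `c` times the graph distance. -/
def scaledMetric {V : Type*} (G : SimpleGraph V) (S : Set V)
    (hS : ∀ x ∈ S, ∀ y ∈ S, G.Reachable x y) {c : ℝ} (hc : 0 < c) : MetricSpace S where
  dist x y := c * G.dist x.1 y.1
  dist_self x := by simp
  dist_comm x y := by
    show c * (G.dist x.1 y.1 : ℝ) = c * (G.dist y.1 x.1 : ℝ)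
    rw [SimpleGraph.dist_comm]
  dist_triangle x y z := by
    show c * (G.dist x.1 z.1 : ℝ) ≤ c * (G.dist x.1 y.1 : ℝ) + c * (G.dist y.1 z.1 : ℝ)
    have hxy := hS x.1 x.2 y.1 y.2
    have hyz := hS y.1 y.2 z.1 z.2
    obtain ⟨p, hp⟩ := hxy.exists_walk_length_eq_dist
    obtain ⟨q, hq⟩ := hyz.exists_walk_length_eq_dist
    have h := SimpleGraph.dist_le (p.append q)
    rw [SimpleGraph.Walk.length_append, hp, hq] at h
    have h' : (G.dist x.1 z.1 : ℝ) ≤ (G.dist x.1 y.1 : ℝ) + (G.dist y.1 z.1 : ℝ) := by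
      exact_mod_cast h
    nlinarith
  eq_of_dist_eq_zero := by
    intro x y h
    have h : c * (G.dist x.1 y.1 : ℝ) = 0 := h
    have hxy := hS x.1 x.2 y.1 y.2
    have h2 : (G.dist x.1 y.1 : ℝ) = 0 := by
      rcases mul_eq_zero.1 h with h' | h'
      · exact absurd h' hc.ne'
      · exact h'
    have h3 : G.dist x.1 y.1 = 0 := by exact_mod_cast h2
    exact Subtype.ext (hxy.dist_eq_zero_iff.1 h3)

open scoped Classical in
/-- The point of the Gromov–Hausdorff space given by a subset `S` of the vertices of a
graph `G`, with distance `c` times the graph distance; a one-point space in degenerate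
cases. -/
def ghSpaceOfSet {n : ℕ} (G : SimpleGraph (Fin n)) (S : Set (Fin n)) (c : ℝ) :
    GromovHausdorff.GHSpace :=
  if h : S.Nonempty ∧ (∀ x ∈ S, ∀ y ∈ S, G.Reachable x y) ∧ 0 < c then
    letI : Nonempty S := h.1.to_subtype
    letI : MetricSpace S := scaledMetric G S h.2.1 h.2.2
    GromovHausdorff.toGHSpace S
  else GromovHausdorff.toGHSpace PUnit.{1}

end MSTNoise

namespace MSTNoise
open scoped Classical

/-- Sorting key of a connected component: components are ordered by decreasing number of
vertices, ties broken by smallest minimal vertex label. -/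
noncomputable def compKey {n : ℕ} {G : SimpleGraph (Fin n)} (c : G.ConnectedComponent) : ℕ :=
  (n - Nat.card c.supp) * n + sInf {m : ℕ | ∃ v ∈ c.supp, (v : Fin n).val = m}

/-- The list of connected components of `G`, ordered by decreasing number of vertices,
ties broken by smallest minimal vertex label. -/
noncomputable def componentList {n : ℕ} (G : SimpleGraph (Fin n)) :
    List G.ConnectedComponent :=
  (Finset.univ : Finset G.ConnectedComponent).toList.mergeSort
    (fun c d => decide (compKey c ≤ compKey d))

/-- The vertex set of the `j`-th largest connected component of `G` (`j ≥ 1`);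
empty if `G` has fewer than `j` components. -/
noncomputable def CjSupp {n : ℕ} (G : SimpleGraph (Fin n)) (j : ℕ) : Set (Fin n) :=
  if h : j - 1 < (componentList G).length then ((componentList G).get ⟨j - 1, h⟩).supp else ∅

/-- The `j`-th largest connected component of `G`, viewed as a graph on the vertex set of
`G` (`j ≥ 1`); the empty graph if `G` has fewer than `j` components. -/
noncomputable def CjGraph {n : ℕ} (G : SimpleGraph (Fin n)) (j : ℕ) : SimpleGraph (Fin n) :=
  SimpleGraph.fromEdgeSet {e | e ∈ G.edgeSet ∧ ∀ v ∈ e, v ∈ CjSupp G j}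

/-- `S j`: the scaled metric space of the `j`-th largest component, as a point of the
Gromov–Hausdorff space (a one-point space if `G` has fewer than `j` components). -/
noncomputable def Sj {n : ℕ} (G : SimpleGraph (Fin n)) (j : ℕ) (c : ℝ) :
    GromovHausdorff.GHSpace :=
  ghSpaceOfSet G (CjSupp G j) c

end MSTNoise

namespace MSTNoise

/-- The uniform distribution on `[0,1]`. -/
noncomputable def uniform01 : Measure ℝ := volume.restrict (Set.Icc (0 : ℝ) 1)

/-- The Bernoulli distribution on `ℝ`: value `1` with probability `e`, value `0` with
probability `1 - e`. -/
noncomputable def bernoulliReal (e : ℝ) : Measure ℝ :=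
  ENNReal.ofReal (1 - e) • Measure.dirac 0 + ENNReal.ofReal e • Measure.dirac 1

/-- The noised weight: the original weight if the Bernoulli mark is `0`, the fresh weight
otherwise. -/
def noised {Ωn : Type*} (w w' b : Ωn → ℝ) (ω : Ωn) : ℝ := if b ω = 0 then w ω else w' ω

/-- `p(n, λ) = 1/n + λ n^{-4/3}`. -/
noncomputable def pnl (n : ℕ) (lam : ℝ) : ℝ := 1 / n + lam * (n : ℝ) ^ (-(4 : ℝ) / 3)

/-- The graph whose edges are those with weight at most `p`. -/
def wGraph {n : ℕ} {Ωn : Type*} (W : Sym2 (Fin n) → Ωn → ℝ) (p : ℝ) (ω : Ωn) :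
    SimpleGraph (Fin n) :=
  SimpleGraph.fromEdgeSet {e | W e ω ≤ p}

/-- The minimum spanning tree of the complete graph on `Fin n` with weights `u`,
as a graph. -/
def MSTGraph {n : ℕ} (u : Sym2 (Fin n) → ℝ) : SimpleGraph (Fin n) :=
  SimpleGraph.fromEdgeSet (MSF (⊤ : SimpleGraph (Fin n)) u)

/-- The rescaled minimum spanning tree, as a point of the Gromov–Hausdorff space:
the vertex set `Fin n` with distance `n^{-1/3}` times the graph distance in the MST. -/
noncomputable def scaledMST {n : ℕ} (u : Sym2 (Fin n) → ℝ) : GromovHausdorff.GHSpace :=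
  ghSpaceOfSet (MSTGraph u) Set.univ ((n : ℝ) ^ (-(1 : ℝ) / 3))

end MSTNoise

namespace MSTNoise

/-- The minimum spanning forest of `G` with weights `u`, viewed as a graph. -/
def MSFGraph {n : ℕ} (G : SimpleGraph (Fin n)) (u : Sym2 (Fin n) → ℝ) :
    SimpleGraph (Fin n) :=
  SimpleGraph.fromEdgeSet (MSF G u)

end MSTNoise

namespace MSTNoise

lemma connE_subset_edgeSet {V : Type*} (G : SimpleGraph V) : ConnE G ⊆ G.edgeSet := by
  rintro e ⟨x, c, _, he⟩
  exact c.edges_subset_edgeSet he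

lemma removed_iff {V : Type*} (G : SimpleGraph V) (u : Sym2 V → ℝ) (e : Sym2 V) :
    e ∈ G.edgeSet \ MSF G u ↔ e ∈ ConnE G ∧ ∃ x y : V, e = s(x, y) ∧
      (SimpleGraph.fromEdgeSet {f | f ∈ ConnE G ∧ u f < u e}).Reachable x y := by
  classical
  constructor
  · rintro ⟨heG, hnot⟩
    simp only [MSF, Set.mem_setOf_eq, not_and, not_forall, not_not] at hnot
    obtain ⟨x, y, hxy, hreach⟩ := hnot heG
    obtain ⟨w⟩ := hreach
    obtain ⟨p, hppath⟩ := w.toPath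
    have hpedges : ∀ f ∈ p.edges, f ∈ G.edgeSet ∧ u f < u e := by
      intro f hf
      have := SimpleGraph.Walk.edges_subset_edgeSet _ hf
      rw [SimpleGraph.edgeSet_fromEdgeSet] at this
      exact this.1
    -- transfer the path to G
    have hq : ∀ f ∈ p.edges, f ∈ G.edgeSet := fun f hf => (hpedges f hf).1
    have hqedges : (p.transfer G hq).edges = p.edges :=
      SimpleGraph.Walk.edges_transfer _ hq
    have hqpath : (p.transfer G hq).IsPath := hppath.transfer hq
    have hadj : G.Adj x y := by rw [← SimpleGraph.mem_edgeSet, ← hxy]; exact heG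
    have henotin : s(y, x) ∉ (p.transfer G hq).edges := by
      intro h
      have : u (s(y, x)) < u e := by
        rw [hqedges] at h
        exact (hpedges _ h).2
      rw [Sym2.eq_swap, ← hxy] at this
      exact lt_irrefl _ this
    have hcyc : (SimpleGraph.Walk.cons hadj.symm (p.transfer G hq)).IsCycle :=
      SimpleGraph.Path.cons_isCycle ⟨p.transfer G hq, hqpath⟩ hadj.symm henotin
    have hcycEdges : (SimpleGraph.Walk.cons hadj.symm (p.transfer G hq)).edges
        = s(y, x) :: (p.transfer G hq).edges := rfl
    have heConn : e ∈ ConnE G := by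
      refine ⟨y, _, hcyc, ?_⟩
      rw [hcycEdges]
      exact List.mem_cons.mpr (Or.inl (by rw [hxy, Sym2.eq_swap]))
    refine ⟨heConn, x, y, hxy, ?_⟩
    set q := p.transfer G hq with hqdef
    -- transfer q to the ConnE-restricted graph
    have hq' : ∀ f ∈ q.edges,
        f ∈ (SimpleGraph.fromEdgeSet {f | f ∈ ConnE G ∧ u f < u e}).edgeSet := by
      intro f hf
      rw [SimpleGraph.edgeSet_fromEdgeSet]
      have hfG : f ∈ G.edgeSet := q.edges_subset_edgeSet hf
      refine ⟨⟨⟨y, _, hcyc, ?_⟩, ?_⟩, ?_⟩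
      · rw [hcycEdges]; right; exact hf
      · rw [hqedges] at hf; exact (hpedges f hf).2
      · exact fun hdiag => (G.not_isDiag_of_mem_edgeSet hfG) hdiag
    exact ⟨q.transfer _ hq'⟩
  · rintro ⟨heConn, x, y, hxy, hreach⟩
    have heG : e ∈ G.edgeSet := connE_subset_edgeSet G heConn
    refine ⟨heG, fun hMSF => ?_⟩
    have hmono : SimpleGraph.fromEdgeSet {f | f ∈ ConnE G ∧ u f < u e} ≤
        SimpleGraph.fromEdgeSet {f | f ∈ G.edgeSet ∧ u f < u e} :=
      SimpleGraph.fromEdgeSet_mono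
        (fun f ⟨hf1, hf2⟩ => ⟨connE_subset_edgeSet G hf1, hf2⟩)
    exact hMSF.2 x y hxy (hreach.mono hmono)

/-- **Identical cycle breaking on two graphs with common cycle structure and common
weights on cycle edges.** If `Conn(G₁) = Conn(G₂)` and the injective weights agree on
this common set, then the sets of removed edges coincide, and consequently the symmetric
difference of the minimum spanning forests equals that of the edge sets. -/
theorem cycle_breaking_common
    {V : Type} [Fintype V] (G₁ G₂ : SimpleGraph V)
    (hConn : ConnE G₁ = ConnE G₂)
    (u₁ u₂ : Sym2 V → ℝ)
    (hu₁ : Set.InjOn u₁ G₁.edgeSet) (hu₂ : Set.InjOn u₂ G₂.edgeSet)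
    (hagree : ∀ e ∈ ConnE G₁, u₁ e = u₂ e) :
    G₁.edgeSet \ MSF G₁ u₁ = G₂.edgeSet \ MSF G₂ u₂ ∧
      symmDiff (MSF G₁ u₁) (MSF G₂ u₂) = symmDiff G₁.edgeSet G₂.edgeSet := by
  have hrem : G₁.edgeSet \ MSF G₁ u₁ = G₂.edgeSet \ MSF G₂ u₂ := by
    ext e
    rw [removed_iff, removed_iff, hConn]
    constructor
    · rintro ⟨heConn, x, y, hxy, hreach⟩
      have hsets : {f | f ∈ ConnE G₂ ∧ u₁ f < u₁ e} = {f | f ∈ ConnE G₂ ∧ u₂ f < u₂ e} := by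
        ext f
        simp only [Set.mem_setOf_eq, and_congr_right_iff]
        intro hf
        rw [hagree f (hConn ▸ hf), hagree e (hConn ▸ heConn)]
      exact ⟨heConn, x, y, hxy, by rwa [hsets] at hreach⟩
    · rintro ⟨heConn, x, y, hxy, hreach⟩
      have hsets : {f | f ∈ ConnE G₂ ∧ u₂ f < u₂ e} = {f | f ∈ ConnE G₂ ∧ u₁ f < u₁ e} := by
        ext f
        simp only [Set.mem_setOf_eq, and_congr_right_iff]
        intro hf
        rw [hagree f (hConn ▸ hf), hagree e (hConn ▸ heConn)]
      exact ⟨heConn, x, y, hxy, by rwa [hsets] at hreach⟩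
  refine ⟨hrem, ?_⟩
  have hsub₁ : MSF G₁ u₁ ⊆ G₁.edgeSet := fun e he => he.1
  have hsub₂ : MSF G₂ u₂ ⊆ G₂.edgeSet := fun e he => he.1
  ext e
  simp only [Set.mem_symmDiff]
  have h1 : e ∈ G₁.edgeSet \ MSF G₁ u₁ ↔ e ∈ G₂.edgeSet \ MSF G₂ u₂ := by rw [hrem]
  simp only [Set.mem_diff] at h1
  constructor
  · rintro (⟨h₁, h₂⟩ | ⟨h₂, h₁⟩)
    · left
      refine ⟨hsub₁ h₁, fun hE₂ => ?_⟩
      have := h1.2 ⟨hE₂, h₂⟩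
      exact this.2 h₁
    · right
      refine ⟨hsub₂ h₂, fun hE₁ => ?_⟩
      have := h1.1 ⟨hE₁, h₁⟩
      exact this.2 h₂
  · rintro (⟨h₁, h₂⟩ | ⟨h₂, h₁⟩)
    · left
      have hnot₂ : e ∉ MSF G₂ u₂ := fun h => h₂ (hsub₂ h)
      refine ⟨?_, hnot₂⟩
      by_contra hnot₁
      exact h₂ (h1.1 ⟨h₁, hnot₁⟩).1
    · right
      have hnot₁ : e ∉ MSF G₁ u₁ := fun h => h₁ (hsub₁ h)
      refine ⟨?_, hnot₁⟩
      by_contra hnot₂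
      exact h₁ (h1.2 ⟨h₂, hnot₂⟩).1

end MSTNoise
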